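/- Let $\Omega$ be a commutative semigroup, $(A, \rhd_{\alpha,\beta})_{\alpha,\beta\in\Omega}$ an $\Omega$-pre-Lie algebra, and $p_\alpha, q_\alpha: A\to A$ two commuting families of $\Omega$-pre-Lie algebra morphisms. Define $x\blacktriangleright_{\alpha,\beta}y := p_\alpha(x)\rhd_{\alpha,\beta}q_\beta(y)$. Then $(A, \blacktriangleright_{\alpha,\beta}, p_\alpha, q_\alpha)_{\alpha,\beta\in\Omega}$ is a BiHom-$\Omega$-pre-Lie algebra. -/
import Mathlib


/-- Yau twist of an Ω-pre-Lie algebra gives a BiHom-Ω-pre-Lie algebra. -/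
theorem stmt_7
    {K : Type*} [Field K] {Ω : Type*} [CommSemigroup Ω]
    {A : Type*} [AddCommGroup A] [Module K A]
    (pre : Ω → Ω → A →ₗ[K] A →ₗ[K] A)
    (p q : Ω → A →ₗ[K] A)
    -- Ω-pre-Lie identity
    (hpre : ∀ (α β γ : Ω) (x y z : A),
      pre α (β * γ) x (pre β γ y z) - pre (α * β) γ (pre α β x y) z
        = pre β (α * γ) y (pre α γ x z) - pre (β * α) γ (pre β α y x) z)
    -- p, q are Ω-pre-Lie algebra morphisms
    (hp : ∀ (α β : Ω) (x y : A), p (α * β) (pre α β x y) = pre α β (p α x) (p β y))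
    (hq : ∀ (α β : Ω) (x y : A), q (α * β) (pre α β x y) = pre α β (q α x) (q β y))
    -- the families commute
    (hpq : ∀ (α : Ω) (x : A), p α (q α x) = q α (p α x))
    -- the twisted operation
    (ob : Ω → Ω → A → A → A)
    (hob : ∀ (α β : Ω) (x y : A), ob α β x y = pre α β (p α x) (q β y)) :
    -- (A, ob, p, q) is a BiHom-Ω-pre-Lie algebra
    (∀ (α β : Ω) (x y : A), p (α * β) (ob α β x y) = ob α β (p α x) (p β y)) ∧
    (∀ (α β : Ω) (x y : A), q (α * β) (ob α β x y) = ob α β (q α x) (q β y)) ∧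
    (∀ (α β γ : Ω) (x y z : A),
      ob α (β * γ) (p α (q α x)) (ob β γ (p β y) z)
          - ob (α * β) γ (ob α β (q α x) (p β y)) (q γ z)
        = ob β (α * γ) (p β (q β y)) (ob α γ (p α x) z)
          - ob (β * α) γ (ob β α (q β y) (p α x)) (q γ z)) := by
  refine ⟨fun α β x y => ?_, fun α β x y => ?_, fun α β γ x y z => ?_⟩
  · rw [hob, hob, hp, hpq]
  · rw [hob, hob, hq, hpq]
  · simp only [hob, hp, hq, hpq]
    exact hpre α β γ (q α (p α (p α x))) (q β (p β (p β y))) (q γ (q γ z))
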